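/- arXiv:1507.02874 — 6 statements merged into one kernel-verified Lean document; each statement's English description precedes it below -/
import Mathlib

section
/- For independent random variables X, Y, W (mutually independent) and any random variable Z on a finite probability space, I(X;Z|W) ≤ I(X;Z|W,Y), where I denotes conditional mutual information. -/
open Finset

/-- The probability that the random variable `X` takes the value `a`,
on a finite sample space with weight function `p`. -/
noncomputable def prb {Ω α : Type*} [Fintype Ω] [DecidableEq α]
    (p : Ω → ℝ) (X : Ω → α) (a : α) : ℝ :=
  ∑ ω ∈ Finset.univ.filter (fun ω => X ω = a), p ω

/-- Shannon entropy of a random variable `X` on a finite probability space. -/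
noncomputable def ent {Ω α : Type*} [Fintype Ω] [Fintype α] [DecidableEq α]
    (p : Ω → ℝ) (X : Ω → α) : ℝ :=
  ∑ a : α, Real.negMulLog (prb p X a)

/-- Conditional mutual information `I(X;Y|W) = H(X,W) + H(Y,W) - H(X,Y,W) - H(W)`. -/
noncomputable def cmi {Ω α β γ : Type*} [Fintype Ω] [Fintype α] [DecidableEq α]
    [Fintype β] [DecidableEq β] [Fintype γ] [DecidableEq γ]
    (p : Ω → ℝ) (X : Ω → α) (Y : Ω → β) (W : Ω → γ) : ℝ :=
  ent p (fun ω => (X ω, W ω)) + ent p (fun ω => (Y ω, W ω))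
    - ent p (fun ω => (X ω, Y ω, W ω)) - ent p W

section auxiliary

open Real

lemma key_pointwise (x u v w : ℝ) (hx : 0 ≤ x) (hxu : x ≤ u) (hxv : x ≤ v) (hxw : x ≤ w) :
    x - u * v / w ≤ x * (log x + log w - log u - log v) := by
  rcases eq_or_lt_of_le hx with h | h
  · rw [← h]
    simp only [zero_sub, zero_mul, neg_nonpos]
    exact div_nonneg (mul_nonneg (hx.trans hxu) (hx.trans hxv)) (hx.trans hxw)
  · have hu : 0 < u := h.trans_le hxu
    have hv : 0 < v := h.trans_le hxv
    have hw : 0 < w := h.trans_le hxw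
    have ht : 0 < u * v / (x * w) := by positivity
    have hlog := Real.log_le_sub_one_of_pos ht
    rw [Real.log_div (by positivity) (by positivity), Real.log_mul hu.ne' hv.ne',
      Real.log_mul h.ne' hw.ne'] at hlog
    have h2 : 1 - u * v / (x * w) ≤ log x + log w - log u - log v := by linarith
    have h3 := mul_le_mul_of_nonneg_left h2 hx
    have h4 : x * (1 - u * v / (x * w)) = x - u * v / w := by
      field_simp
    linarith [h3, h4.symm.le]

lemma negMulLog_sum_eq {B : Type*} [Fintype B] (f : B → ℝ) :
    negMulLog (∑ b, f b) = ∑ b, -(f b * log (∑ b', f b')) := by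
  rw [negMulLog, neg_mul, Finset.sum_mul, ← Finset.sum_neg_distrib]

lemma sum_comm₃ {A B C M : Type*} [Fintype A] [Fintype B] [Fintype C] [AddCommMonoid M]
    (f : A → B → C → M) :
    ∑ a, ∑ b, ∑ c, f a b c = ∑ c, ∑ a, ∑ b, f a b c := by
  rw [show (∑ a, ∑ b, ∑ c, f a b c) = ∑ a, ∑ c, ∑ b, f a b c from
    Finset.sum_congr rfl fun a _ => Finset.sum_comm]
  exact Finset.sum_comm

/-- Nonnegativity of conditional mutual information, at the level of an abstract
finite joint distribution `q` on `A × B × C` (curried). -/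
lemma dist_cmi_nonneg {A B C : Type*} [Fintype A] [Fintype B] [Fintype C]
    (q : A → B → C → ℝ) (hq0 : ∀ a b c, 0 ≤ q a b c)
    (hq1 : ∑ a, ∑ b, ∑ c, q a b c = 1) :
    (∑ a, ∑ b, ∑ c, negMulLog (q a b c)) + ∑ c, negMulLog (∑ a, ∑ b, q a b c)
      ≤ (∑ a, ∑ c, negMulLog (∑ b, q a b c)) + ∑ b, ∑ c, negMulLog (∑ a, q a b c) := by
  set qAC : A → C → ℝ := fun a c => ∑ b, q a b c with hqAC
  set qBC : B → C → ℝ := fun b c => ∑ a, q a b c with hqBC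
  set qC : C → ℝ := fun c => ∑ a, ∑ b, q a b c with hqC
  have hAC : (∑ a, ∑ c, negMulLog (qAC a c)) = ∑ a, ∑ b, ∑ c, -(q a b c * log (qAC a c)) := by
    refine Finset.sum_congr rfl fun a _ => ?_
    rw [Finset.sum_comm]
    exact Finset.sum_congr rfl fun c _ => negMulLog_sum_eq _
  have hBC : (∑ b, ∑ c, negMulLog (qBC b c)) = ∑ a, ∑ b, ∑ c, -(q a b c * log (qBC b c)) := by
    calc (∑ b, ∑ c, negMulLog (qBC b c))
        = ∑ b, ∑ c, ∑ a, -(q a b c * log (qBC b c)) :=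
          Finset.sum_congr rfl fun b _ => Finset.sum_congr rfl fun c _ => negMulLog_sum_eq _
      _ = ∑ a, ∑ b, ∑ c, -(q a b c * log (qBC b c)) :=
          sum_comm₃ fun b c a => -(q a b c * log (qBC b c))
  have hC : (∑ c, negMulLog (qC c)) = ∑ a, ∑ b, ∑ c, -(q a b c * log (qC c)) := by
    rw [sum_comm₃ fun a b c => -(q a b c * log (qC c))]
    refine Finset.sum_congr rfl fun c _ => ?_
    rw [show (negMulLog (qC c)) = ∑ a, -((∑ b, q a b c) * log (qC c)) by
      rw [negMulLog, neg_mul, hqC, Finset.sum_mul, ← Finset.sum_neg_distrib]]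
    refine Finset.sum_congr rfl fun a _ => ?_
    rw [Finset.sum_mul, ← Finset.sum_neg_distrib]
  rw [hAC, hBC, hC, ← sub_nonneg]
  have hcomb : (∑ a, ∑ b, ∑ c, -(q a b c * log (qAC a c)))
      + (∑ a, ∑ b, ∑ c, -(q a b c * log (qBC b c)))
      - ((∑ a, ∑ b, ∑ c, negMulLog (q a b c)) + ∑ a, ∑ b, ∑ c, -(q a b c * log (qC c)))
      = ∑ a, ∑ b, ∑ c,
          (q a b c * (log (q a b c) + log (qC c) - log (qAC a c) - log (qBC b c))) := by
    rw [← Finset.sum_add_distrib, ← Finset.sum_add_distrib, ← Finset.sum_sub_distrib]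
    refine Finset.sum_congr rfl fun a _ => ?_
    rw [← Finset.sum_add_distrib, ← Finset.sum_add_distrib, ← Finset.sum_sub_distrib]
    refine Finset.sum_congr rfl fun b _ => ?_
    rw [← Finset.sum_add_distrib, ← Finset.sum_add_distrib, ← Finset.sum_sub_distrib]
    refine Finset.sum_congr rfl fun c _ => ?_
    rw [negMulLog]
    ring
  rw [hcomb]
  have hbound : ∑ a, ∑ b, ∑ c, (q a b c - qAC a c * qBC b c / qC c)
      ≤ ∑ a, ∑ b, ∑ c,
          (q a b c * (log (q a b c) + log (qC c) - log (qAC a c) - log (qBC b c))) := by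
    refine Finset.sum_le_sum fun a _ => Finset.sum_le_sum fun b _ =>
      Finset.sum_le_sum fun c _ => ?_
    refine key_pointwise _ _ _ _ (hq0 a b c) ?_ ?_ ?_
    · exact Finset.single_le_sum (fun b' _ => hq0 a b' c) (mem_univ b)
    · exact Finset.single_le_sum (fun a' _ => hq0 a' b c) (mem_univ a)
    · calc q a b c ≤ ∑ b', q a b' c :=
            Finset.single_le_sum (fun b' _ => hq0 a b' c) (mem_univ b)
        _ ≤ qC c := Finset.single_le_sum
            (fun a' _ => Finset.sum_nonneg fun b' _ => hq0 a' b' c) (mem_univ a)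
  refine le_trans ?_ hbound
  have hS : ∑ a, ∑ b, ∑ c, qAC a c * qBC b c / qC c ≤ 1 := by
    rw [sum_comm₃]
    have h1 : ∀ c, (∑ a, ∑ b, qAC a c * qBC b c / qC c) = qC c * qC c / qC c := by
      intro c
      have h2 : ∀ a, (∑ b, qAC a c * qBC b c / qC c) = qAC a c * qC c / qC c := by
        intro a
        rw [← Finset.sum_div, ← Finset.mul_sum]
        congr 2
        rw [hqC]
        exact Finset.sum_comm
      rw [Finset.sum_congr rfl fun a _ => h2 a, ← Finset.sum_div, ← Finset.sum_mul]
    calc (∑ c, ∑ a, ∑ b, qAC a c * qBC b c / qC c) = ∑ c, qC c * qC c / qC c :=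
          Finset.sum_congr rfl fun c _ => h1 c
      _ ≤ ∑ c, qC c := by
          refine Finset.sum_le_sum fun c _ => ?_
          rcases eq_or_ne (qC c) 0 with h | h
          · simp [h]
          · rw [mul_div_assoc, div_self h, mul_one]
      _ = 1 := by rw [← hq1, hqC]; exact (sum_comm₃ _).symm
  have hsplit : (∑ a, ∑ b, ∑ c, (q a b c - qAC a c * qBC b c / qC c))
      = 1 - ∑ a, ∑ b, ∑ c, qAC a c * qBC b c / qC c := by
    rw [← hq1, ← Finset.sum_sub_distrib]
    refine Finset.sum_congr rfl fun a _ => ?_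
    rw [← Finset.sum_sub_distrib]
    refine Finset.sum_congr rfl fun b _ => ?_
    rw [← Finset.sum_sub_distrib]
  linarith [hsplit, hS]

variable {Ω : Type*} [Fintype Ω] (p : Ω → ℝ)

lemma prb_nonneg (hp0 : ∀ ω, 0 ≤ p ω) {α : Type*} [DecidableEq α] (X : Ω → α) (a : α) :
    0 ≤ prb p X a := Finset.sum_nonneg fun ω _ => hp0 ω

lemma sum_prb {α : Type*} [Fintype α] [DecidableEq α] (hp1 : ∑ ω : Ω, p ω = 1) (X : Ω → α) :
    ∑ a, prb p X a = 1 := by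
  unfold prb
  rw [Finset.sum_fiberwise univ X p, hp1]

lemma prb_comp_inj {κ κ' : Type*} [DecidableEq κ] [DecidableEq κ']
    (g : κ → κ') (hg : Function.Injective g) (V : Ω → κ) (k : κ) :
    prb p (fun ω => g (V ω)) (g k) = prb p V k := by
  unfold prb
  congr 1
  exact Finset.filter_congr fun ω _ => by simp [hg.eq_iff]

lemma prb_not_range {κ κ' : Type*} [DecidableEq κ'] (g : κ → κ') (V : Ω → κ) (v' : κ')
    (h : ∀ k, g k ≠ v') : prb p (fun ω => g (V ω)) v' = 0 := by
  unfold prb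
  rw [Finset.filter_false_of_mem (fun ω _ => h (V ω)), Finset.sum_empty]

lemma ent_comp_inj {κ κ' : Type*} [Fintype κ] [DecidableEq κ] [Fintype κ'] [DecidableEq κ']
    (g : κ → κ') (hg : Function.Injective g) (V : Ω → κ) :
    ent p (fun ω => g (V ω)) = ent p V := by
  unfold ent
  rw [← Finset.sum_subset (Finset.subset_univ (univ.image g))
    (fun v' _ hv' => by
      rw [prb_not_range p g V v' (fun k hk => hv' (Finset.mem_image.mpr ⟨k, mem_univ k, hk⟩)),
        Real.negMulLog_zero]),
    Finset.sum_image (fun a _ b _ h => hg h)]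
  exact Finset.sum_congr rfl fun k _ => by rw [prb_comp_inj p g hg V k]

lemma prb_eq_sum_pair {κ β : Type*} [DecidableEq κ] [Fintype β] [DecidableEq β]
    (V : Ω → κ) (Y : Ω → β) (v : κ) :
    prb p V v = ∑ b, prb p (fun ω => (Y ω, V ω)) (b, v) := by
  unfold prb
  rw [← Finset.sum_fiberwise (univ.filter fun ω => V ω = v) Y p]
  refine Finset.sum_congr rfl fun b _ => ?_
  rw [Finset.filter_filter]
  refine Finset.sum_congr ?_ fun _ _ => rfl
  refine Finset.filter_congr fun ω _ => ?_
  simp [Prod.ext_iff, and_comm]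

lemma ent_of_prod {A B : Type*} [Fintype A] [DecidableEq A] [Fintype B] [DecidableEq B]
    (V : Ω → A × B) (u : A → ℝ) (v : B → ℝ) (hu : ∑ a, u a = 1) (hv : ∑ b, v b = 1)
    (h : ∀ x : A × B, prb p V x = u x.1 * v x.2) :
    ent p V = (∑ a, negMulLog (u a)) + ∑ b, negMulLog (v b) := by
  unfold ent
  rw [Fintype.sum_prod_type]
  calc (∑ a, ∑ b, negMulLog (prb p V (a, b)))
      = ∑ a, ∑ b, (v b * negMulLog (u a) + u a * negMulLog (v b)) := by
        refine Finset.sum_congr rfl fun a _ => Finset.sum_congr rfl fun b _ => ?_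
        rw [h (a, b)]
        exact negMulLog_mul _ _
    _ = ∑ a, ((∑ b, v b) * negMulLog (u a) + u a * ∑ b, negMulLog (v b)) := by
        refine Finset.sum_congr rfl fun a _ => ?_
        rw [Finset.sum_add_distrib, ← Finset.sum_mul, ← Finset.mul_sum]
    _ = (∑ a, negMulLog (u a)) + ∑ b, negMulLog (v b) := by
        rw [hv]
        simp only [one_mul]
        rw [Finset.sum_add_distrib, ← Finset.sum_mul, hu, one_mul]

end auxiliary

/-- For mutually independent random variables `X, Y, W` and any random variable `Z`
on a finite probability space, `I(X;Z|W) ≤ I(X;Z|W,Y)`. -/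
theorem cmi_le_cmi_of_indep {Ω α β γ δ : Type*} [Fintype Ω]
    [Fintype α] [DecidableEq α] [Fintype β] [DecidableEq β]
    [Fintype γ] [DecidableEq γ] [Fintype δ] [DecidableEq δ]
    (p : Ω → ℝ) (hp0 : ∀ ω, 0 ≤ p ω) (hp1 : ∑ ω : Ω, p ω = 1)
    (X : Ω → α) (Y : Ω → β) (W : Ω → γ) (Z : Ω → δ)
    (hindep : ∀ (a : α) (b : β) (c : γ),
      prb p (fun ω => (X ω, Y ω, W ω)) (a, b, c) = prb p X a * prb p Y b * prb p W c) :
    cmi p X Z W ≤ cmi p X Z (fun ω => (W ω, Y ω)) := by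
  have hyY : ∑ b, prb p Y b = 1 := sum_prb p hp1 Y
  have hxX : ∑ a, prb p X a = 1 := sum_prb p hp1 X
  have hwW : ∑ c, prb p W c = 1 := sum_prb p hp1 W
  -- independence facts at the level of values
  have P1 : ∀ x : α × γ, prb p (fun ω => (X ω, W ω)) x = prb p X x.1 * prb p W x.2 := by
    rintro ⟨a, c⟩
    rw [prb_eq_sum_pair p (fun ω => (X ω, W ω)) Y (a, c)]
    have step : ∀ b, prb p (fun ω => (Y ω, X ω, W ω)) (b, a, c)
        = prb p X a * prb p Y b * prb p W c := by
      intro b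
      have hσ : Function.Injective (fun t : α × β × γ => (t.2.1, t.1, t.2.2)) := by
        intro s t h
        simp only [Prod.ext_iff] at h ⊢
        tauto
      have := prb_comp_inj p (fun t : α × β × γ => (t.2.1, t.1, t.2.2)) hσ
        (fun ω => (X ω, Y ω, W ω)) (a, b, c)
      rw [show prb p (fun ω => (Y ω, X ω, W ω)) (b, a, c)
        = prb p (fun ω => (X ω, Y ω, W ω)) (a, b, c) from this, hindep]
    rw [Finset.sum_congr rfl fun b _ => step b]
    rw [show (∑ b, prb p X a * prb p Y b * prb p W c)
      = (prb p X a * prb p W c) * ∑ b, prb p Y b by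
        rw [Finset.mul_sum]; exact Finset.sum_congr rfl fun x _ => by ring]
    rw [hyY, mul_one]
  have P2 : ∀ x : γ × β, prb p (fun ω => (W ω, Y ω)) x = prb p W x.1 * prb p Y x.2 := by
    rintro ⟨c, b⟩
    rw [prb_eq_sum_pair p (fun ω => (W ω, Y ω)) X (c, b)]
    have step : ∀ a, prb p (fun ω => (X ω, W ω, Y ω)) (a, c, b)
        = prb p X a * prb p Y b * prb p W c := by
      intro a
      have hσ : Function.Injective (fun t : α × β × γ => (t.1, t.2.2, t.2.1)) := by
        intro s t h
        simp only [Prod.ext_iff] at h ⊢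
        tauto
      have := prb_comp_inj p (fun t : α × β × γ => (t.1, t.2.2, t.2.1)) hσ
        (fun ω => (X ω, Y ω, W ω)) (a, b, c)
      rw [show prb p (fun ω => (X ω, W ω, Y ω)) (a, c, b)
        = prb p (fun ω => (X ω, Y ω, W ω)) (a, b, c) from this, hindep]
    rw [Finset.sum_congr rfl fun a _ => step a]
    rw [show (∑ a, prb p X a * prb p Y b * prb p W c)
      = (prb p Y b * prb p W c) * ∑ a, prb p X a by
        rw [Finset.mul_sum]; exact Finset.sum_congr rfl fun x _ => by ring]
    rw [hxX, mul_one, mul_comm]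
  have P3 : ∀ x : α × γ × β, prb p (fun ω => (X ω, W ω, Y ω)) x
      = prb p X x.1 * prb p (fun ω => (W ω, Y ω)) x.2 := by
    rintro ⟨a, c, b⟩
    have hσ : Function.Injective (fun t : α × β × γ => (t.1, t.2.2, t.2.1)) := by
      intro s t h
      simp only [Prod.ext_iff] at h ⊢
      tauto
    have := prb_comp_inj p (fun t : α × β × γ => (t.1, t.2.2, t.2.1)) hσ
      (fun ω => (X ω, Y ω, W ω)) (a, b, c)
    rw [show prb p (fun ω => (X ω, W ω, Y ω)) (a, c, b)
      = prb p (fun ω => (X ω, Y ω, W ω)) (a, b, c) from this, hindep, P2 (c, b)]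
    ring
  -- entropy consequences of independence
  have F1 : ent p (fun ω => (X ω, W ω)) = ent p X + ent p W :=
    ent_of_prod p _ (prb p X) (prb p W) hxX hwW P1
  have F2 : ent p (fun ω => (X ω, W ω, Y ω)) = ent p X + ent p (fun ω => (W ω, Y ω)) :=
    ent_of_prod p _ (prb p X) (prb p (fun ω => (W ω, Y ω))) hxX
      (sum_prb p hp1 _) P3
  -- the conditional mutual information I(X;Y | Z,W) ≥ 0, via the distribution lemma
  set VV : Ω → α × β × δ × γ := fun ω => (X ω, Y ω, Z ω, W ω) with hVV
  set q : α → β → δ × γ → ℝ := fun a b c => prb p VV (a, b, c) with hq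
  have hq0 : ∀ a b c, 0 ≤ q a b c := fun a b c => prb_nonneg p hp0 VV _
  have hq1 : ∑ a, ∑ b, ∑ c, q a b c = 1 := by
    have h := sum_prb p hp1 VV
    rw [Fintype.sum_prod_type] at h
    rw [← h]
    refine Finset.sum_congr rfl fun a _ => ?_
    rw [Fintype.sum_prod_type]
  -- marginals
  have M1 : ∀ (a : α) (c : δ × γ),
      prb p (fun ω => (X ω, Z ω, W ω)) (a, c) = ∑ b, q a b c := by
    intro a c
    rw [prb_eq_sum_pair p (fun ω => (X ω, Z ω, W ω)) Y (a, c)]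
    refine Finset.sum_congr rfl fun b _ => ?_
    have hσ : Function.Injective (fun t : α × β × δ × γ => (t.2.1, t.1, t.2.2)) := by
      intro s t h
      simp only [Prod.ext_iff] at h ⊢
      tauto
    exact prb_comp_inj p (fun t : α × β × δ × γ => (t.2.1, t.1, t.2.2)) hσ VV (a, b, c)
  have M2 : ∀ (b : β) (c : δ × γ),
      prb p (fun ω => (Y ω, Z ω, W ω)) (b, c) = ∑ a, q a b c := by
    intro b c
    exact prb_eq_sum_pair p (fun ω => (Y ω, Z ω, W ω)) X (b, c)
  have M3 : ∀ c : δ × γ, prb p (fun ω => (Z ω, W ω)) c = ∑ a, ∑ b, q a b c := by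
    intro c
    rw [prb_eq_sum_pair p (fun ω => (Z ω, W ω)) Y c]
    rw [Finset.sum_congr rfl fun b (_ : b ∈ univ) =>
      prb_eq_sum_pair p (fun ω => (Y ω, Z ω, W ω)) X (b, c)]
    exact Finset.sum_comm
  -- entropies as sums over values of q
  have E1 : ent p (fun ω => (X ω, Z ω, W ω)) = ∑ a, ∑ c, Real.negMulLog (∑ b, q a b c) := by
    unfold ent
    rw [Fintype.sum_prod_type]
    exact Finset.sum_congr rfl fun a _ => Finset.sum_congr rfl fun c _ => by rw [M1 a c]
  have E2 : ent p (fun ω => (Y ω, Z ω, W ω)) = ∑ b, ∑ c, Real.negMulLog (∑ a, q a b c) := by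
    unfold ent
    rw [Fintype.sum_prod_type]
    exact Finset.sum_congr rfl fun b _ => Finset.sum_congr rfl fun c _ => by rw [M2 b c]
  have E3 : ent p VV = ∑ a, ∑ b, ∑ c, Real.negMulLog (q a b c) := by
    unfold ent
    rw [Fintype.sum_prod_type]
    refine Finset.sum_congr rfl fun a _ => ?_
    rw [Fintype.sum_prod_type]
  have E4 : ent p (fun ω => (Z ω, W ω)) = ∑ c, Real.negMulLog (∑ a, ∑ b, q a b c) := by
    unfold ent
    exact Finset.sum_congr rfl fun c _ => by rw [M3 c]
  have key : ent p VV + ent p (fun ω => (Z ω, W ω))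
      ≤ ent p (fun ω => (X ω, Z ω, W ω)) + ent p (fun ω => (Y ω, Z ω, W ω)) := by
    rw [E1, E2, E3, E4]
    exact dist_cmi_nonneg q hq0 hq1
  -- reshuffling of tuples
  have G1 : ent p (fun ω => (Z ω, W ω, Y ω)) = ent p (fun ω => (Y ω, Z ω, W ω)) := by
    have hσ : Function.Injective (fun t : β × δ × γ => (t.2.1, t.2.2, t.1)) := by
      intro s t h
      simp only [Prod.ext_iff] at h ⊢
      tauto
    exact ent_comp_inj p (fun t : β × δ × γ => (t.2.1, t.2.2, t.1)) hσ
      (fun ω => (Y ω, Z ω, W ω))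
  have G2 : ent p (fun ω => (X ω, Z ω, W ω, Y ω)) = ent p VV := by
    have hσ : Function.Injective (fun t : α × β × δ × γ => (t.1, t.2.2.1, t.2.2.2, t.2.1)) := by
      intro s t h
      simp only [Prod.ext_iff] at h ⊢
      tauto
    exact ent_comp_inj p (fun t : α × β × δ × γ => (t.1, t.2.2.1, t.2.2.2, t.2.1)) hσ VV
  simp only [cmi]
  linarith [F1, F2, G1, G2, key]
end

section
/- Let X_1,…,X_m be jointly distributed random variables and for a partition P of M = {1,…,m} with |P| ≥ 2 define Δ(P) = (1/(|P|−1))·(∑_{A ∈ P} H(X_A) − H(X_M)). Let S be the singleton partition. Then for any partition P with |P| ≥ 2, the identity ∑_{A ∈ P} |A^c|·Δ(P_{A^c}) = (|P|−1)·(Δ(P) + (m−1)·Δ(S)) holds, where for a nonempty set C ⊊ M, P_C is the partition consisting of C^c together with the singletons of elements of C (and P_C = S when |C| = m−1). -/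
open Finset

/-- Joint Shannon entropy `H(X_A)` of the collection `(X_i : i ∈ A)`. -/
noncomputable def entS {Ω ι α : Type*} [Fintype Ω] [DecidableEq ι]
    [Fintype α] [DecidableEq α] (p : Ω → ℝ) (X : ι → Ω → α) (A : Finset ι) : ℝ :=
  ent p (fun ω => fun i : A => X i.1 ω)

/-- `Δ(P) = (1/(|P|−1)) (∑_{A ∈ P} H(X_A) − H(X_M))` for a partition `P` of `M`. -/
noncomputable def dPart {Ω α : Type*} {m : ℕ} [Fintype Ω] [Fintype α] [DecidableEq α]
    (p : Ω → ℝ) (X : Fin m → Ω → α)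
    (P : Finpartition (Finset.univ : Finset (Fin m))) : ℝ :=
  (1 / ((P.parts.card : ℝ) - 1)) * (∑ A ∈ P.parts, entS p X A - entS p X Finset.univ)

/-- `Δ(S)` for the singleton partition `S`. -/
noncomputable def dS {Ω α : Type*} {m : ℕ} [Fintype Ω] [Fintype α] [DecidableEq α]
    (p : Ω → ℝ) (X : Fin m → Ω → α) : ℝ :=
  (1 / ((m : ℝ) - 1)) * (∑ i : Fin m, entS p X {i} - entS p X Finset.univ)

/-- `Δ(P_B)` for the partition `P_B = {Bᶜ} ∪ {{b} : b ∈ B}` (so `|P_B| − 1 = |B|`). -/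
noncomputable def dPB {Ω α : Type*} {m : ℕ} [Fintype Ω] [Fintype α] [DecidableEq α]
    (p : Ω → ℝ) (X : Fin m → Ω → α) (B : Finset (Fin m)) : ℝ :=
  (1 / (B.card : ℝ)) *
    (entS p X Bᶜ + ∑ b ∈ B, entS p X {b} - entS p X Finset.univ)

/-- The identity `∑_{A ∈ P} |Aᶜ|·Δ(P_{Aᶜ}) = (|P|−1)·(Δ(P) + (m−1)·Δ(S))` for any
partition `P` of `M = {1,…,m}` with at least two cells. -/
theorem sum_compl_delta_identity {Ω α : Type*} [Fintype Ω] [Fintype α] [DecidableEq α]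
    {m : ℕ} (hm : 2 ≤ m) (p : Ω → ℝ) (hp0 : ∀ ω, 0 ≤ p ω) (hp1 : ∑ ω : Ω, p ω = 1)
    (X : Fin m → Ω → α)
    (P : Finpartition (Finset.univ : Finset (Fin m))) (hP : 2 ≤ P.parts.card) :
    ∑ A ∈ P.parts, ((Aᶜ : Finset (Fin m)).card : ℝ) * dPB p X Aᶜ
      = ((P.parts.card : ℝ) - 1) * (dPart p X P + ((m : ℝ) - 1) * dS p X) := by
  classical
  set H := entS p X (Finset.univ : Finset (Fin m)) with hH
  set T := ∑ i : Fin m, entS p X {i} with hT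
  set k := P.parts.card with hk
  -- each part is not univ
  have hne : ∀ A ∈ P.parts, A ≠ Finset.univ := by
    intro A hA hAu
    obtain ⟨B, hB, hBA⟩ : ∃ B ∈ P.parts, B ≠ A := by
      by_contra h
      push_neg at h
      have : P.parts ⊆ {A} := fun B hB => Finset.mem_singleton.2 (h B hB)
      have := Finset.card_le_card this
      simp at this
      omega
    have hdisj := P.disjoint hB hA hBA
    have hBne := P.nonempty_of_mem_parts hB
    obtain ⟨b, hb⟩ := hBne
    have : b ∈ A := by rw [hAu]; exact Finset.mem_univ b
    exact (Finset.disjoint_left.1 hdisj hb) this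
  have key : ∀ A ∈ P.parts, ((Aᶜ : Finset (Fin m)).card : ℝ) * dPB p X Aᶜ
      = entS p X A + (T - ∑ b ∈ A, entS p X {b}) - H := by
    intro A hA
    have hcard : (Aᶜ : Finset (Fin m)).card ≠ 0 := by
      rw [Finset.card_ne_zero, ← Finset.compl_ne_univ_iff_nonempty, compl_compl]
      exact hne A hA
    have hsplit : ∑ b ∈ Aᶜ, entS p X {b} = T - ∑ b ∈ A, entS p X {b} := by
      rw [hT, ← Finset.sum_compl_add_sum A (fun b => entS p X {b})]
      ring
    rw [dPB, compl_compl, hsplit]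
    have : ((Aᶜ : Finset (Fin m)).card : ℝ) ≠ 0 := Nat.cast_ne_zero.2 hcard
    field_simp
    rw [hH]
  rw [Finset.sum_congr rfl key]
  have hsumT : ∑ A ∈ P.parts, ∑ b ∈ A, entS p X {b} = T := by
    have h := Finset.sum_biUnion (s := P.parts) (t := id)
      (f := fun b => entS p X {b}) P.supIndep.pairwiseDisjoint
    rw [P.biUnion_parts] at h
    simp only [id_eq] at h
    rw [hT]
    exact h.symm
  have hsum : ∑ A ∈ P.parts, (entS p X A + (T - ∑ b ∈ A, entS p X {b}) - H)
      = ∑ A ∈ P.parts, entS p X A + (k : ℝ) * T - T - (k : ℝ) * H := by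
    rw [Finset.sum_sub_distrib, Finset.sum_add_distrib, Finset.sum_sub_distrib,
      hsumT, Finset.sum_const, Finset.sum_const, ← hk, nsmul_eq_mul, nsmul_eq_mul]
    ring
  rw [hsum, dPart, dS, ← hH, ← hT, ← hk]
  have hk1 : (k : ℝ) - 1 ≠ 0 := by
    have : (2 : ℝ) ≤ (k : ℝ) := by exact_mod_cast hP
    linarith
  have hm1 : (m : ℝ) - 1 ≠ 0 := by
    have : (2 : ℝ) ≤ (m : ℝ) := by exact_mod_cast hm
    linarith
  field_simp
  ring
end

section
/- Let X_1,…,X_m (m ≥ 3) be jointly distributed random variables and Δ as above. If Δ(S) ≤ Δ(P_B) for every subset B of M with 1 ≤ |B| ≤ m−2, then Δ(S) ≤ Δ(P) for every partition P of M with |P| ≥ 2. Moreover, if the hypothesis holds with strict inequalities, then Δ(S) < Δ(P) for every partition P ≠ S with |P| ≥ 2. -/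
open Finset

section Aux

variable {Ω α : Type*} [Fintype Ω] [Fintype α] [DecidableEq α] {m : ℕ}

lemma aux_sum_parts_card (P : Finpartition (Finset.univ : Finset (Fin m))) :
    ∑ A ∈ P.parts, ((A.card : ℝ)) = (m : ℝ) := by
  have : ∑ A ∈ P.parts, A.card = m := by
    rw [P.sum_card_parts, Finset.card_univ, Fintype.card_fin]
  exact_mod_cast congrArg (Nat.cast : ℕ → ℝ) this

lemma aux_sum_over_parts (P : Finpartition (Finset.univ : Finset (Fin m)))
    (H : Fin m → ℝ) : ∑ A ∈ P.parts, ∑ i ∈ A, H i = ∑ i : Fin m, H i := by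
  have := (Finset.sum_biUnion (s := P.parts) (t := id) (f := H) P.disjoint).symm
  simpa [P.biUnion_parts] using this

lemma aux_sum_compl (A : Finset (Fin m)) (H : Fin m → ℝ) :
    ∑ i ∈ Aᶜ, H i = ∑ i : Fin m, H i - ∑ i ∈ A, H i := by
  rw [eq_sub_iff_add_eq, Finset.sum_compl_add_sum]

lemma aux_helper_sum (hm : 3 ≤ m) (p : Ω → ℝ) (X : Fin m → Ω → α)
    (P : Finpartition (Finset.univ : Finset (Fin m))) :
    ∑ A ∈ P.parts,
        (entS p X A + ∑ i ∈ Aᶜ, entS p X {i} - entS p X Finset.univ)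
      = (∑ A ∈ P.parts, entS p X A - entS p X Finset.univ)
        + ((P.parts.card : ℝ) - 1) * ((m : ℝ) - 1) * dS p X := by
  have hmne : (m : ℝ) - 1 ≠ 0 := by
    have : (3 : ℝ) ≤ m := by exact_mod_cast hm
    intro h; linarith
  have hδ : ((m : ℝ) - 1) * dS p X
      = ∑ i : Fin m, entS p X {i} - entS p X Finset.univ := by
    rw [dS]; field_simp
  have e1 : ∑ A ∈ P.parts,
      (entS p X A + ∑ i ∈ Aᶜ, entS p X {i} - entS p X Finset.univ)
      = ∑ A ∈ P.parts, entS p X A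
        + ∑ A ∈ P.parts, (∑ i ∈ Aᶜ, entS p X {i})
        - (P.parts.card : ℝ) * entS p X Finset.univ := by
    rw [Finset.sum_sub_distrib, Finset.sum_add_distrib, Finset.sum_const, nsmul_eq_mul]
  have e2 : ∑ A ∈ P.parts, (∑ i ∈ Aᶜ, entS p X {i})
      = (P.parts.card : ℝ) * (∑ i : Fin m, entS p X {i})
        - ∑ i : Fin m, entS p X {i} := by
    simp_rw [aux_sum_compl]
    rw [Finset.sum_sub_distrib, Finset.sum_const, nsmul_eq_mul,
      aux_sum_over_parts P (fun i => entS p X {i})]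
  rw [e1, e2]
  linear_combination (1 - (P.parts.card : ℝ)) * hδ

end Aux

/-- If `Δ(S) ≤ Δ(P_B)` for all `B` with `1 ≤ |B| ≤ m−2`, then `S` minimizes `Δ` over all
partitions with at least 2 cells; with strict inequalities, `S` is the unique minimizer. -/
theorem singleton_partition_minimizer {Ω α : Type*} [Fintype Ω] [Fintype α] [DecidableEq α]
    {m : ℕ} (hm : 3 ≤ m) (p : Ω → ℝ) (hp0 : ∀ ω, 0 ≤ p ω) (hp1 : ∑ ω : Ω, p ω = 1)
    (X : Fin m → Ω → α) :
    ((∀ B : Finset (Fin m), 1 ≤ B.card → B.card ≤ m - 2 → dS p X ≤ dPB p X B) →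
      ∀ P : Finpartition (Finset.univ : Finset (Fin m)), 2 ≤ P.parts.card →
        dS p X ≤ dPart p X P)
    ∧ ((∀ B : Finset (Fin m), 1 ≤ B.card → B.card ≤ m - 2 → dS p X < dPB p X B) →
      ∀ P : Finpartition (Finset.univ : Finset (Fin m)), 2 ≤ P.parts.card →
        P.parts ≠ Finset.univ.image (fun i : Fin m => ({i} : Finset (Fin m))) →
        dS p X < dPart p X P) := by
  classical
  have hmR : (3 : ℝ) ≤ m := by exact_mod_cast hm
  have hmne : (m : ℝ) - 1 ≠ 0 := by intro h; linarith
  -- value of the per-part expression for singleton parts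
  have hsing : ∀ i : Fin m,
      entS p X ({i} : Finset (Fin m)) + ∑ j ∈ ({i} : Finset (Fin m))ᶜ, entS p X {j}
        - entS p X Finset.univ = dS p X * ((m : ℝ) - 1) := by
    intro i
    have h1 : entS p X ({i} : Finset (Fin m))
        + ∑ j ∈ ({i} : Finset (Fin m))ᶜ, entS p X {j} = ∑ j : Fin m, entS p X {j} := by
      rw [aux_sum_compl ({i} : Finset (Fin m)) (fun j => entS p X {j})]
      simp
    rw [h1, dS]
    field_simp
  -- cardinality of parts of a nontrivial partition is at most m-1
  have hle : ∀ (P : Finpartition (Finset.univ : Finset (Fin m))), 2 ≤ P.parts.card →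
      ∀ A ∈ P.parts, A.card ≤ m - 1 := by
    intro P hP2 A hA
    obtain ⟨A', hA', hne⟩ := Finset.exists_mem_ne (s := P.parts) (by omega) A
    obtain ⟨x, hx⟩ := P.nonempty_of_mem_parts hA'
    have hdisj : Disjoint A' A := P.disjoint hA' hA hne
    have hxA : x ∉ A := fun h => (Finset.disjoint_left.1 hdisj hx) h
    have hlt : A.card < m := by
      have hss : A ⊂ Finset.univ :=
        (Finset.ssubset_iff_of_subset (Finset.subset_univ A)).2 ⟨x, Finset.mem_univ x, hxA⟩
      have := Finset.card_lt_card hss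
      simpa [Finset.card_univ] using this
    omega
  -- the per-part inequality for big parts, weak form
  have hbig : ∀ (A : Finset (Fin m)), 2 ≤ A.card → A.card ≤ m - 1 →
      dS p X ≤ dPB p X Aᶜ →
      dS p X * ((m : ℝ) - A.card)
        ≤ entS p X A + ∑ j ∈ Aᶜ, entS p X {j} - entS p X Finset.univ := by
    intro A h2 h1 hyp
    have hAm : A.card ≤ m := by omega
    have hcR : ((Aᶜ.card : ℕ) : ℝ) = (m : ℝ) - A.card := by
      rw [Finset.card_compl, Fintype.card_fin, Nat.cast_sub hAm]
    have hpos : (0 : ℝ) < (m : ℝ) - A.card := by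
      have : A.card < m := by omega
      have : (A.card : ℝ) < m := by exact_mod_cast this
      linarith
    rw [dPB, compl_compl, hcR, one_div, ← div_eq_inv_mul, le_div_iff₀ hpos] at hyp
    exact hyp
  -- strict form
  have hbigs : ∀ (A : Finset (Fin m)), 2 ≤ A.card → A.card ≤ m - 1 →
      dS p X < dPB p X Aᶜ →
      dS p X * ((m : ℝ) - A.card)
        < entS p X A + ∑ j ∈ Aᶜ, entS p X {j} - entS p X Finset.univ := by
    intro A h2 h1 hyp
    have hAm : A.card ≤ m := by omega
    have hcR : ((Aᶜ.card : ℕ) : ℝ) = (m : ℝ) - A.card := by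
      rw [Finset.card_compl, Fintype.card_fin, Nat.cast_sub hAm]
    have hpos : (0 : ℝ) < (m : ℝ) - A.card := by
      have : A.card < m := by omega
      have : (A.card : ℝ) < m := by exact_mod_cast this
      linarith
    rw [dPB, compl_compl, hcR, one_div, ← div_eq_inv_mul, lt_div_iff₀ hpos] at hyp
    exact hyp
  -- compl card hypotheses
  have hcompl_card : ∀ (A : Finset (Fin m)), 2 ≤ A.card → A.card ≤ m - 1 →
      1 ≤ Aᶜ.card ∧ Aᶜ.card ≤ m - 2 := by
    intro A h2 h1
    rw [Finset.card_compl, Fintype.card_fin]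
    omega
  -- weak per-part bound for every part
  have bound : ∀ (hw : ∀ B : Finset (Fin m), 1 ≤ B.card → B.card ≤ m - 2 →
        dS p X ≤ dPB p X B)
      (P : Finpartition (Finset.univ : Finset (Fin m))) (hP2 : 2 ≤ P.parts.card),
      ∀ A ∈ P.parts, dS p X * ((m : ℝ) - A.card)
        ≤ entS p X A + ∑ j ∈ Aᶜ, entS p X {j} - entS p X Finset.univ := by
    intro hw P hP2 A hA
    rcases Nat.lt_or_ge A.card 2 with hc | hc
    · have hpos := (P.nonempty_of_mem_parts hA).card_pos
      have h1 : A.card = 1 := by omega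
      obtain ⟨i, rfl⟩ := Finset.card_eq_one.1 h1
      rw [hsing i, Finset.card_singleton, Nat.cast_one]
    · have hm1 := hle P hP2 A hA
      obtain ⟨hc1, hc2⟩ := hcompl_card A hc hm1
      exact hbig A hc hm1 (hw Aᶜ hc1 hc2)
  -- from the summed bound to the conclusion
  have final : ∀ (P : Finpartition (Finset.univ : Finset (Fin m))) (hP2 : 2 ≤ P.parts.card),
      ∑ A ∈ P.parts, dS p X * ((m : ℝ) - A.card)
        = dS p X * ((P.parts.card : ℝ) * m - m) := by
    intro P hP2
    rw [← Finset.mul_sum, Finset.sum_sub_distrib, Finset.sum_const, nsmul_eq_mul,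
      aux_sum_parts_card]
  have conclude : ∀ (P : Finpartition (Finset.univ : Finset (Fin m)))
      (hP2 : 2 ≤ P.parts.card),
      dS p X * ((P.parts.card : ℝ) - 1)
          ≤ ∑ A ∈ P.parts, entS p X A - entS p X Finset.univ →
      dS p X ≤ dPart p X P := by
    intro P hP2 hs
    have hk : (0 : ℝ) < (P.parts.card : ℝ) - 1 := by
      have : (2 : ℝ) ≤ (P.parts.card : ℝ) := by exact_mod_cast hP2
      linarith
    rw [dPart, one_div, ← div_eq_inv_mul, le_div_iff₀ hk]
    exact hs
  have concludes : ∀ (P : Finpartition (Finset.univ : Finset (Fin m)))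
      (hP2 : 2 ≤ P.parts.card),
      dS p X * ((P.parts.card : ℝ) - 1)
          < ∑ A ∈ P.parts, entS p X A - entS p X Finset.univ →
      dS p X < dPart p X P := by
    intro P hP2 hs
    have hk : (0 : ℝ) < (P.parts.card : ℝ) - 1 := by
      have : (2 : ℝ) ≤ (P.parts.card : ℝ) := by exact_mod_cast hP2
      linarith
    rw [dPart, one_div, ← div_eq_inv_mul, lt_div_iff₀ hk]
    exact hs
  constructor
  · -- weak statement
    intro hw P hP2
    have hsum := Finset.sum_le_sum (bound hw P hP2)
    rw [final P hP2, aux_helper_sum hm p X P] at hsum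
    apply conclude P hP2
    have key : dS p X * ((P.parts.card : ℝ) - 1)
        = dS p X * ((P.parts.card : ℝ) * m - m)
          - ((P.parts.card : ℝ) - 1) * ((m : ℝ) - 1) * dS p X := by ring
    linarith
  · -- strict statement
    intro hsstrict P hP2 hPne
    have hw : ∀ B : Finset (Fin m), 1 ≤ B.card → B.card ≤ m - 2 →
        dS p X ≤ dPB p X B := fun B h1 h2 => (hsstrict B h1 h2).le
    -- there is a part of size at least 2
    have hex : ∃ A ∈ P.parts, 2 ≤ A.card := by
      by_contra hcon
      push_neg at hcon
      apply hPne
      ext A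
      simp only [Finset.mem_image, Finset.mem_univ, true_and]
      constructor
      · intro hA
        have hpos := (P.nonempty_of_mem_parts hA).card_pos
        have := hcon A hA
        have h1 : A.card = 1 := by omega
        obtain ⟨i, rfl⟩ := Finset.card_eq_one.1 h1
        exact ⟨i, rfl⟩
      · rintro ⟨i, rfl⟩
        obtain ⟨t, ht, hit⟩ := P.exists_mem (Finset.mem_univ i)
        have hpos := (P.nonempty_of_mem_parts ht).card_pos
        have := hcon t ht
        have h1 : t.card = 1 := by omega
        obtain ⟨j, rfl⟩ := Finset.card_eq_one.1 h1
        have hij : i = j := by simpa using hit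
        rwa [← hij] at ht
    obtain ⟨A0, hA0, hA02⟩ := hex
    have hA0m := hle P hP2 A0 hA0
    obtain ⟨hc1, hc2⟩ := hcompl_card A0 hA02 hA0m
    have hstrict := hbigs A0 hA02 hA0m (hsstrict A0ᶜ hc1 hc2)
    have hsum := Finset.sum_lt_sum (bound hw P hP2) ⟨A0, hA0, hstrict⟩
    rw [final P hP2, aux_helper_sum hm p X P] at hsum
    apply concludes P hP2
    have key : dS p X * ((P.parts.card : ℝ) - 1)
        = dS p X * ((P.parts.card : ℝ) * m - m)
          - ((P.parts.card : ℝ) - 1) * ((m : ℝ) - 1) * dS p X := by ring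
    linarith
end

section
/- Let m ≥ 3 and X_1,…,X_m be jointly distributed random variables such that the singleton partition S is the unique minimizer of Δ(P) over all partitions P of M with |P| ≥ 2. Then for every T ⊂ M with |T| = m−1, Δ_T(S) < Δ(S), where Δ_T(S) = (1/(m−2))·(∑_{i ∈ T} H(X_i) − H(X_T)). -/
open Finset

/-- If the singleton partition `S` is the unique minimizer of `Δ` over partitions with at
least 2 cells, then `Δ_T(S) < Δ(S)` for every `T ⊂ M` with `|T| = m−1`. -/
theorem deltaT_lt_deltaS_of_unique_min {Ω α : Type*} [Fintype Ω] [Fintype α] [DecidableEq α]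
    {m : ℕ} (hm : 3 ≤ m) (p : Ω → ℝ) (hp0 : ∀ ω, 0 ≤ p ω) (hp1 : ∑ ω : Ω, p ω = 1)
    (X : Fin m → Ω → α)
    (hmin : ∀ P : Finpartition (Finset.univ : Finset (Fin m)), 2 ≤ P.parts.card →
      P.parts ≠ Finset.univ.image (fun i : Fin m => ({i} : Finset (Fin m))) →
      dS p X < dPart p X P) :
    ∀ T : Finset (Fin m), T ⊂ Finset.univ → T.card = m - 1 →
      (1 / ((m : ℝ) - 2)) * (∑ i ∈ T, entS p X {i} - entS p X T) < dS p X := by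

  intro T hT hTcard
  -- basic facts
  have hm1 : (1:ℝ) ≤ (m:ℝ) - 2 := by
    have : (3:ℝ) ≤ (m:ℝ) := by exact_mod_cast hm
    linarith
  have hTne : T.Nonempty := by
    rw [← Finset.card_pos, hTcard]; omega
  have hTc_card : Tᶜ.card = 1 := by
    have := Finset.card_compl T
    simp [hTcard, Fintype.card_fin] at this
    omega
  obtain ⟨j, hj⟩ := Finset.card_eq_one.mp hTc_card
  have hTcne : (Tᶜ : Finset (Fin m)).Nonempty := ⟨j, by simp [hj]⟩
  have hTne' : T ≠ Tᶜ := by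
    intro h
    obtain ⟨x, hx⟩ := hTne
    have : x ∈ Tᶜ := h ▸ hx
    simp [Finset.mem_compl] at this
    exact this hx
  -- the two-cell partition {T, Tᶜ}
  have hdisj : Disjoint T Tᶜ := disjoint_compl_right
  let P : Finpartition (Finset.univ : Finset (Fin m)) :=
    { parts := {T, Tᶜ}
      supIndep := (Finset.supIndep_pair hTne').mpr hdisj
      sup_parts := by
        simp [Finset.sup_insert, Finset.sup_singleton, Finset.sup_eq_union,
          Finset.union_compl]
      bot_notMem := by
        simp only [Finset.bot_eq_empty, Finset.mem_insert, Finset.mem_singleton]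
        push_neg
        exact ⟨Ne.symm hTne.ne_empty, Ne.symm hTcne.ne_empty⟩ }
  have hPcard : P.parts.card = 2 := Finset.card_pair hTne'
  have hPne : P.parts ≠ Finset.univ.image (fun i : Fin m => ({i} : Finset (Fin m))) := by
    intro h
    have hcard : (Finset.univ.image (fun i : Fin m => ({i} : Finset (Fin m)))).card = m := by
      rw [Finset.card_image_of_injective _ (fun a b hab => by
        simpa using hab)]
      simp
    rw [h, hcard] at hPcard
    omega
  have hlt := hmin P (by omega) hPne
  -- unfold dPart for P
  have hsum : ∑ A ∈ P.parts, entS p X A = entS p X T + entS p X Tᶜ := by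
    exact Finset.sum_pair hTne'
  rw [dPart, hPcard, hsum] at hlt
  norm_num at hlt
  -- split the full singleton sum
  have hsplit : ∑ i : Fin m, entS p X {i} = ∑ i ∈ T, entS p X {i} + entS p X {j} := by
    rw [← Finset.sum_add_sum_compl T, hj, Finset.sum_singleton]
  -- abbreviations
  set a := ∑ i ∈ T, entS p X {i} with ha
  set b := entS p X {j} with hb
  set HT := entS p X T with hHT
  set E := entS p X Finset.univ with hE
  rw [hj] at hlt
  rw [dS, hsplit] at hlt ⊢
  have hmr : (m:ℝ) - 1 > 0 := by linarith
  have hmr2 : (m:ℝ) - 2 > 0 := by linarith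
  rw [div_mul_eq_mul_div, div_mul_eq_mul_div, one_mul, one_mul,
    div_lt_div_iff₀ hmr2 hmr]
  rw [div_mul_eq_mul_div, one_mul, div_lt_iff₀ hmr] at hlt
  nlinarith [hlt, hmr, hmr2]
end

section
/- For integers m > t ≥ 2 and any integer b with t ≤ b ≤ m−2, the inequality C(m−1,t−1) − (1/b)·C(b,t) − ((t−1)/(m−1))·C(m,t) = (1/t)·(C(m−2,t−1) − C(b−1,t−1)) > 0 holds, where C(n,k) denotes the binomial coefficient. -/
/-- For integers `m > t ≥ 2` and `t ≤ b ≤ m−2`,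
`C(m−1,t−1) − (1/b)·C(b,t) − ((t−1)/(m−1))·C(m,t) = (1/t)·(C(m−2,t−1) − C(b−1,t−1)) > 0`. -/
theorem choose_identity_pos (m t b : ℕ) (ht : 2 ≤ t) (htm : t < m)
    (hb1 : t ≤ b) (hb2 : b ≤ m - 2) :
    (((m - 1).choose (t - 1) : ℚ) - (1 / (b : ℚ)) * (b.choose t : ℚ)
        - (((t : ℚ) - 1) / ((m : ℚ) - 1)) * (m.choose t : ℚ)
      = (1 / (t : ℚ)) * (((m - 2).choose (t - 1) : ℚ) - ((b - 1).choose (t - 1) : ℚ)))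
    ∧ 0 < (1 / (t : ℚ)) * (((m - 2).choose (t - 1) : ℚ) - ((b - 1).choose (t - 1) : ℚ)) := by
  have hm4 : 4 ≤ m := by omega
  -- natural number identities
  have h1 : b * (b - 1).choose (t - 1) = b.choose t * t := by
    have := Nat.add_one_mul_choose_eq (b - 1) (t - 1)
    simpa [Nat.succ_eq_add_one, Nat.sub_add_cancel (by omega : 1 ≤ b),
      Nat.sub_add_cancel (by omega : 1 ≤ t)] using this
  have h2 : m * (m - 1).choose (t - 1) = m.choose t * t := by
    have := Nat.add_one_mul_choose_eq (m - 1) (t - 1)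
    simpa [Nat.succ_eq_add_one, Nat.sub_add_cancel (by omega : 1 ≤ m),
      Nat.sub_add_cancel (by omega : 1 ≤ t)] using this
  have h3 : (m - 2).choose (t - 1) * (m - 1) = (m - 1).choose (t - 1) * (m - t) := by
    have := Nat.choose_mul_succ_eq (m - 2) (t - 1)
    have e1 : m - 2 + 1 = m - 1 := by omega
    have e2 : m - 1 - (t - 1) = m - t := by omega
    rw [e1, e2] at this
    exact this
  -- strict inequality on binomials
  have h4 : (b - 1).choose (t - 1) < (m - 2).choose (t - 1) := by
    have hsplit : b.choose (t - 1) = (b - 1).choose (t - 2) + (b - 1).choose (t - 1) := by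
      have := Nat.choose_succ_succ (b - 1) (t - 2)
      have e1 : b - 1 + 1 = b := by omega
      have e2 : t - 2 + 1 = t - 1 := by omega
      simp only [Nat.succ_eq_add_one] at this
      rw [e1, e2] at this
      exact this
    have hpos : 0 < (b - 1).choose (t - 2) := Nat.choose_pos (by omega)
    have hlt : (b - 1).choose (t - 1) < b.choose (t - 1) := by omega
    exact lt_of_lt_of_le hlt (Nat.choose_le_choose _ hb2)
  -- casts
  have hb0 : (b : ℚ) ≠ 0 := Nat.cast_ne_zero.mpr (by omega)
  have ht0 : (t : ℚ) ≠ 0 := Nat.cast_ne_zero.mpr (by omega)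
  have hm1 : (m : ℚ) - 1 ≠ 0 := by
    have : (2 : ℚ) ≤ (m : ℚ) := by exact_mod_cast (by omega : 2 ≤ m)
    linarith
  have q1 : (b : ℚ) * ((b - 1).choose (t - 1) : ℚ) = (b.choose t : ℚ) * t := by
    exact_mod_cast h1
  have q2 : (m : ℚ) * ((m - 1).choose (t - 1) : ℚ) = (m.choose t : ℚ) * t := by
    exact_mod_cast h2
  have q3 : ((m - 2).choose (t - 1) : ℚ) * ((m : ℚ) - 1)
      = ((m - 1).choose (t - 1) : ℚ) * ((m : ℚ) - t) := by
    have h3' := h3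
    zify [show 1 ≤ m by omega, show t ≤ m by omega] at h3'
    exact_mod_cast h3'
  constructor
  · field_simp
    linear_combination ((m : ℚ) - 1) * q1 + (b : ℚ) * ((t : ℚ) - 1) * q2 - (b : ℚ) * q3
  · have hDE : ((b - 1).choose (t - 1) : ℚ) < ((m - 2).choose (t - 1) : ℚ) := by
      exact_mod_cast h4
    have : (0 : ℚ) < 1 / (t : ℚ) := by positivity
    exact mul_pos this (by linarith)
end

section
/- Let X_M and Y_M be two independent multiterminal sources on the same terminal set M (i.e., the tuple (X_i)_{i∈M} is independent of the tuple (Y_i)_{i∈M}), and define the clubbed source Z_i = (X_i, Y_i). Then for every partition P of M with |P| ≥ 2, Δ_Z(P) = Δ_X(P) + Δ_Y(P), where Δ_W(P) = (1/(|P|−1))·(∑_{A ∈ P} H(W_A) − H(W_M)) for W ∈ {X, Y, Z}. Consequently, min_P Δ_Z(P) ≥ min_P Δ_X(P) + min_P Δ_Y(P). -/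
open Finset

lemma prb_sum {Ω α : Type*} [Fintype Ω] [Fintype α] [DecidableEq α]
    (p : Ω → ℝ) (X : Ω → α) : ∑ a : α, prb p X a = ∑ ω : Ω, p ω := by
  simpa [prb] using Finset.sum_fiberwise Finset.univ X p

lemma prb_comp {Ω α γ : Type*} [Fintype Ω] [Fintype α] [DecidableEq α] [DecidableEq γ]
    (p : Ω → ℝ) (X : Ω → α) (e : α → γ) (b : γ) :
    prb p (fun ω => e (X ω)) b
      = ∑ a ∈ Finset.univ.filter (fun a => e a = b), prb p X a := by
  simp only [prb]
  rw [Finset.sum_fiberwise_eq_sum_filter Finset.univ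
    (Finset.univ.filter (fun a => e a = b)) X p]
  congr 1
  ext ω
  simp

lemma ent_comp_equiv {Ω α γ : Type*} [Fintype Ω] [Fintype α] [DecidableEq α]
    [Fintype γ] [DecidableEq γ]
    (p : Ω → ℝ) (X : Ω → α) (e : α ≃ γ) :
    ent p (fun ω => e (X ω)) = ent p X := by
  unfold ent
  rw [← Equiv.sum_comp e]
  refine Finset.sum_congr rfl fun a _ => ?_
  congr 1
  unfold prb
  congr 1
  ext ω
  simp

lemma ent_pair {Ω α β : Type*} [Fintype Ω] [Fintype α] [DecidableEq α]
    [Fintype β] [DecidableEq β]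
    (p : Ω → ℝ) (hp1 : ∑ ω : Ω, p ω = 1) (X : Ω → α) (Y : Ω → β)
    (h : ∀ a b, prb p (fun ω => (X ω, Y ω)) (a, b) = prb p X a * prb p Y b) :
    ent p (fun ω => (X ω, Y ω)) = ent p X + ent p Y := by
  have hX : ∑ a : α, prb p X a = 1 := by rw [prb_sum, hp1]
  have hY : ∑ b : β, prb p Y b = 1 := by rw [prb_sum, hp1]
  unfold ent
  rw [Fintype.sum_prod_type]
  have : ∀ a : α, ∑ b : β, Real.negMulLog (prb p (fun ω => (X ω, Y ω)) (a, b))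
      = Real.negMulLog (prb p X a) + prb p X a * ∑ b : β, Real.negMulLog (prb p Y b) := by
    intro a
    simp only [h, Real.negMulLog_mul]
    rw [Finset.sum_add_distrib, ← Finset.sum_mul, ← Finset.mul_sum, hY, one_mul]
  simp only [this]
  rw [Finset.sum_add_distrib, ← Finset.sum_mul, hX, one_mul]

lemma prb_restrict_indep {Ω α β : Type*} [Fintype Ω]
    [Fintype α] [DecidableEq α] [Fintype β] [DecidableEq β] {m : ℕ}
    (p : Ω → ℝ)
    (X : Fin m → Ω → α) (Y : Fin m → Ω → β)
    (hindep : ∀ (f : Fin m → α) (g : Fin m → β),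
      prb p (fun ω => ((fun i => X i ω), (fun i => Y i ω))) (f, g)
        = prb p (fun ω => fun i => X i ω) f * prb p (fun ω => fun i => Y i ω) g)
    (A : Finset (Fin m)) (f : A → α) (g : A → β) :
    prb p (fun ω => ((fun i : A => X i.1 ω), (fun i : A => Y i.1 ω))) (f, g)
      = prb p (fun ω => fun i : A => X i.1 ω) f
        * prb p (fun ω => fun i : A => Y i.1 ω) g := by
  classical
  set rα : (Fin m → α) → (A → α) := fun F i => F i.1 with hrα
  set rβ : (Fin m → β) → (A → β) := fun G i => G i.1 with hrβ
  have hL := prb_comp p (fun ω => ((fun i => X i ω), (fun i => Y i ω)))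
    (fun q => (rα q.1, rβ q.2)) (f, g)
  have hX := prb_comp p (fun ω => fun i => X i ω) rα f
  have hY := prb_comp p (fun ω => fun i => Y i ω) rβ g
  rw [show (fun ω => ((fun i : A => X i.1 ω), (fun i : A => Y i.1 ω)))
      = (fun ω => ((fun q : (Fin m → α) × (Fin m → β) => (rα q.1, rβ q.2))
          ((fun i => X i ω), (fun i => Y i ω)))) from rfl, hL]
  rw [show (fun ω => fun i : A => X i.1 ω)
      = (fun ω => rα (fun i => X i ω)) from rfl, hX]
  rw [show (fun ω => fun i : A => Y i.1 ω)
      = (fun ω => rβ (fun i => Y i ω)) from rfl, hY]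
  rw [Finset.sum_mul_sum]
  rw [show (Finset.univ.filter
      (fun q : (Fin m → α) × (Fin m → β) => (rα q.1, rβ q.2) = (f, g)))
      = (Finset.univ.filter (fun F => rα F = f)) ×ˢ
        (Finset.univ.filter (fun G => rβ G = g)) by
    ext q
    simp [Prod.ext_iff]]
  rw [Finset.sum_product]
  exact Finset.sum_congr rfl fun F _ => Finset.sum_congr rfl fun G _ => hindep F G

lemma entS_club {Ω α β : Type*} [Fintype Ω]
    [Fintype α] [DecidableEq α] [Fintype β] [DecidableEq β] {m : ℕ}
    (p : Ω → ℝ) (hp1 : ∑ ω : Ω, p ω = 1)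
    (X : Fin m → Ω → α) (Y : Fin m → Ω → β)
    (hindep : ∀ (f : Fin m → α) (g : Fin m → β),
      prb p (fun ω => ((fun i => X i ω), (fun i => Y i ω))) (f, g)
        = prb p (fun ω => fun i => X i ω) f * prb p (fun ω => fun i => Y i ω) g)
    (A : Finset (Fin m)) :
    entS p (fun i ω => (X i ω, Y i ω)) A = entS p X A + entS p Y A := by
  unfold entS
  have he := ent_comp_equiv p (fun ω => fun i : A => (X i.1 ω, Y i.1 ω))
    (Equiv.arrowProdEquivProdArrow A (fun _ => α) (fun _ => β))
  rw [← he]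
  have : (fun ω => (Equiv.arrowProdEquivProdArrow A (fun _ => α) (fun _ => β))
      (fun i : A => (X i.1 ω, Y i.1 ω)))
      = fun ω => ((fun i : A => X i.1 ω), (fun i : A => Y i.1 ω)) := rfl
  rw [this]
  exact ent_pair p hp1 _ _ (fun f g => prb_restrict_indep p X Y hindep A f g)

instance finpartFinite {m : ℕ} : Finite (Finpartition (Finset.univ : Finset (Fin m))) :=
  Finite.of_injective (fun P => P.parts) (fun P Q h => by
    cases P; cases Q; simpa using h)

/-- For independent multiterminal sources `X_M` and `Y_M` with clubbed source
`Z_i = (X_i, Y_i)`: `Δ_Z(P) = Δ_X(P) + Δ_Y(P)` for every partition `P` with `|P| ≥ 2`, and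
consequently `min_P Δ_Z(P) ≥ min_P Δ_X(P) + min_P Δ_Y(P)`. -/
theorem clubbed_source_delta {Ω α β : Type*} [Fintype Ω]
    [Fintype α] [DecidableEq α] [Fintype β] [DecidableEq β] {m : ℕ}
    (p : Ω → ℝ) (hp0 : ∀ ω, 0 ≤ p ω) (hp1 : ∑ ω : Ω, p ω = 1)
    (X : Fin m → Ω → α) (Y : Fin m → Ω → β)
    (hindep : ∀ (f : Fin m → α) (g : Fin m → β),
      prb p (fun ω => ((fun i => X i ω), (fun i => Y i ω))) (f, g)
        = prb p (fun ω => fun i => X i ω) f * prb p (fun ω => fun i => Y i ω) g) :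
    (∀ P : Finpartition (Finset.univ : Finset (Fin m)), 2 ≤ P.parts.card →
      dPart p (fun i ω => (X i ω, Y i ω)) P = dPart p X P + dPart p Y P)
    ∧ sInf {r : ℝ | ∃ P : Finpartition (Finset.univ : Finset (Fin m)),
          2 ≤ P.parts.card ∧ r = dPart p (fun i ω => (X i ω, Y i ω)) P}
      ≥ sInf {r : ℝ | ∃ P : Finpartition (Finset.univ : Finset (Fin m)),
          2 ≤ P.parts.card ∧ r = dPart p X P}
        + sInf {r : ℝ | ∃ P : Finpartition (Finset.univ : Finset (Fin m)),
          2 ≤ P.parts.card ∧ r = dPart p Y P} := by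
  have hent := entS_club p hp1 X Y hindep
  have h1 : ∀ P : Finpartition (Finset.univ : Finset (Fin m)), 2 ≤ P.parts.card →
      dPart p (fun i ω => (X i ω, Y i ω)) P = dPart p X P + dPart p Y P := by
    intro P _
    unfold dPart
    simp only [hent]
    rw [Finset.sum_add_distrib]
    ring
  refine ⟨h1, ?_⟩
  set SZ := {r : ℝ | ∃ P : Finpartition (Finset.univ : Finset (Fin m)),
      2 ≤ P.parts.card ∧ r = dPart p (fun i ω => (X i ω, Y i ω)) P} with hSZ
  set SX := {r : ℝ | ∃ P : Finpartition (Finset.univ : Finset (Fin m)),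
      2 ≤ P.parts.card ∧ r = dPart p X P} with hSX
  set SY := {r : ℝ | ∃ P : Finpartition (Finset.univ : Finset (Fin m)),
      2 ≤ P.parts.card ∧ r = dPart p Y P} with hSY
  have hfin : ∀ (W : Finpartition (Finset.univ : Finset (Fin m)) → ℝ),
      Set.Finite {r : ℝ | ∃ P, 2 ≤ P.parts.card ∧ r = W P} := by
    intro W
    have : {r : ℝ | ∃ P, 2 ≤ P.parts.card ∧ r = W P}
        ⊆ Set.range W := by rintro r ⟨P, _, rfl⟩; exact ⟨P, rfl⟩
    exact (Set.finite_range W).subset this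
  by_cases hne : SZ.Nonempty
  · obtain ⟨P, hP2, hPr⟩ := hne.csInf_mem (hfin _)
    rw [ge_iff_le, hPr, h1 P hP2]
    gcongr
    · exact csInf_le (hfin _).bddBelow ⟨P, hP2, rfl⟩
    · exact csInf_le (hfin _).bddBelow ⟨P, hP2, rfl⟩
  · have hZ : SZ = ∅ := Set.not_nonempty_iff_eq_empty.mp hne
    have hX : SX = ∅ := by
      by_contra h
      obtain ⟨r, P, hP2, _⟩ := Set.nonempty_iff_ne_empty.mpr h
      exact hne ⟨_, P, hP2, rfl⟩
    have hY : SY = ∅ := by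
      by_contra h
      obtain ⟨r, P, hP2, _⟩ := Set.nonempty_iff_ne_empty.mpr h
      exact hne ⟨_, P, hP2, rfl⟩
    rw [hZ, hX, hY]
    simp [Real.sInf_empty]
end
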